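/- Let n ∈ ℕ, N = 2^n, and let G be the n-fold Kronecker power over 𝔽₂ of the kernel [[1,0],[1,1]]. Suppose i, j ∈ {0,…,N−1} with i ≠ j satisfy popcount(i) = popcount(j) = ℓ ≥ 1 and i AND j = 0 (disjoint bit supports). Then for every T ⊆ {t ∈ {0,…,N−1} : popcount(t) ≥ ℓ+1}, i₁(g_i + g_j + Σ_{t∈T} g_t) ≥ i₁(g_i + g_j) = 2^{ℓ+1} − 2. -/

import Mathlib

open Finset

/-- The polar kernel `G₂ = [[1,0],[1,1]]` over `𝔽₂`. -/
def polarKernel : Matrix (Fin 2) (Fin 2) (ZMod 2) := !![1, 0; 1, 1]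

/-- The `n`-fold Kronecker power of the polar kernel, an `N × N` matrix over `𝔽₂`
with `N = 2 ^ n`, rows and columns indexed by `0, …, N-1`. -/
def polarG : (n : ℕ) → Matrix (Fin (2 ^ n)) (Fin (2 ^ n)) (ZMod 2)
  | 0 => 1
  | n + 1 =>
    Matrix.reindex (finCongr (by ring)) (finCongr (by ring))
      (Matrix.reindex finProdFinEquiv finProdFinEquiv
        (Matrix.kroneckerMap (· * ·) polarKernel (polarG n)))

/-- Row `g_t` of the polar matrix, as a vector in `𝔽₂^N`. -/
def row (n : ℕ) (t : Fin (2 ^ n)) : Fin (2 ^ n) → ZMod 2 := fun c => polarG n t c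

/-- Hamming weight `i₁(v)`: the number of nonzero coordinates of `v`. -/
def hammingWeight {N : ℕ} (v : Fin N → ZMod 2) : ℕ :=
  (Finset.univ.filter fun c => v c ≠ 0).card

/-- `popcount j`: the number of ones in the binary representation of `j`. -/
def popcount (j : ℕ) : ℕ := (Nat.bits j).count true

lemma and_eq_left_iff {c t : ℕ} : c &&& t = c ↔ ∀ k, c.testBit k = true → t.testBit k = true := by
  constructor
  · intro h k hk
    have := congrArg (Nat.testBit · k) h
    simp only [Nat.testBit_land, hk, Bool.true_and] at this
    exact this
  · intro h
    apply Nat.eq_of_testBit_eq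
    intro k
    rw [Nat.testBit_land]
    cases hck : c.testBit k
    · simp
    · simp [h k hck]

lemma mask_split {n c t : ℕ} :
    c &&& t = c ↔ ((c / 2^n) &&& (t / 2^n) = c / 2^n ∧ (c % 2^n) &&& (t % 2^n) = c % 2^n) := by
  simp only [and_eq_left_iff, ← Nat.shiftRight_eq_div_pow, Nat.testBit_shiftRight,
    Nat.testBit_mod_two_pow, Bool.and_eq_true, decide_eq_true_eq]
  constructor
  · intro h
    exact ⟨fun k hk => h _ hk, fun k hk => ⟨hk.1, h _ hk.2⟩⟩
  · rintro ⟨h1, h2⟩ k hk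
    by_cases hkn : k < n
    · exact (h2 k ⟨hkn, hk⟩).2
    · have := h1 (k - n)
      have hnk : n + (k - n) = k := by omega
      rw [hnk] at this
      exact this hk

lemma polarKernel_apply (a b : Fin 2) :
    polarKernel a b = if (b : ℕ) &&& (a : ℕ) = (b : ℕ) then 1 else 0 := by
  fin_cases a <;> fin_cases b <;> simp [polarKernel] <;> rfl

theorem polarG_apply : ∀ (n : ℕ) (t c : Fin (2^n)),
    polarG n t c = if (c : ℕ) &&& (t : ℕ) = (c : ℕ) then 1 else 0
  | 0, t, c => by
    have ht : (t : ℕ) = 0 := by have := t.isLt; simpa using Nat.lt_one_iff.mp (by simpa using this)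
    have hc : (c : ℕ) = 0 := by have := c.isLt; simpa using Nat.lt_one_iff.mp (by simpa using this)
    have htc : t = c := Fin.ext (by rw [ht, hc])
    rw [htc]
    show (1 : Matrix (Fin (2^0)) (Fin (2^0)) (ZMod 2)) c c = _
    rw [Matrix.one_apply_eq, hc]
    simp
  | n + 1, t, c => by
    have key : polarG (n+1) t c =
        polarKernel ((finProdFinEquiv.symm (finCongr (by ring : 2^(n+1) = 2 * 2^n) t)).1)
          ((finProdFinEquiv.symm (finCongr (by ring : 2^(n+1) = 2 * 2^n) c)).1) *
        polarG n ((finProdFinEquiv.symm (finCongr (by ring : 2^(n+1) = 2 * 2^n) t)).2)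
          ((finProdFinEquiv.symm (finCongr (by ring : 2^(n+1) = 2 * 2^n) c)).2) := rfl
    rw [key, polarKernel_apply, polarG_apply n]
    have e1 : ∀ x : Fin (2^(n+1)),
        (((finProdFinEquiv.symm (finCongr (by ring : 2^(n+1) = 2 * 2^n) x)).1 : ℕ) = (x : ℕ) / 2^n)
        ∧ (((finProdFinEquiv.symm (finCongr (by ring : 2^(n+1) = 2 * 2^n) x)).2 : ℕ) = (x : ℕ) % 2^n) := by
      intro x
      simp [finProdFinEquiv, Fin.divNat, Fin.modNat]
    rw [(e1 t).1, (e1 t).2, (e1 c).1, (e1 c).2]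
    have hC := mask_split (n := n) (c := (c:ℕ)) (t := (t:ℕ))
    by_cases h1 : ((c:ℕ) / 2^n) &&& ((t:ℕ) / 2^n) = (c:ℕ) / 2^n <;>
      by_cases h2 : ((c:ℕ) % 2^n) &&& ((t:ℕ) % 2^n) = (c:ℕ) % 2^n <;>
      simp [h1, h2, hC]


/-- the set of bit positions of a natural number -/
def bitFinset (m : ℕ) : Finset ℕ := m.bitIndices.toFinset

lemma mem_bitIndices_iff {m a : ℕ} : a ∈ m.bitIndices ↔ m.testBit a = true := by
  induction' m using Nat.binaryRec with b m ih generalizing a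
  · simp
  · cases b
    · rw [Nat.bitIndices_bit_false]
      cases a with
      | zero => rw [Nat.testBit_bit_zero]; simp
      | succ a => rw [Nat.testBit_bit_succ]; simp [ih]
    · rw [Nat.bitIndices_bit_true]
      cases a with
      | zero => rw [Nat.testBit_bit_zero]; simp
      | succ a => rw [Nat.testBit_bit_succ]; simp [ih]

lemma mem_bitFinset_iff {m a : ℕ} : a ∈ bitFinset m ↔ m.testBit a = true := by
  rw [bitFinset, List.mem_toFinset, mem_bitIndices_iff]

lemma bitFinset_inj : Function.Injective bitFinset := by
  intro a b hab
  apply Nat.eq_of_testBit_eq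
  intro k
  have := Finset.ext_iff.mp hab k
  simp only [mem_bitFinset_iff] at this
  cases h1 : a.testBit k <;> cases h2 : b.testBit k <;> simp_all

lemma and_eq_left_iff' {c t : ℕ} : c &&& t = c ↔ ∀ k, c.testBit k = true → t.testBit k = true := by
  constructor
  · intro h k hk
    have := congrArg (Nat.testBit · k) h
    simp only [Nat.testBit_land, hk, Bool.true_and] at this
    exact this
  · intro h
    apply Nat.eq_of_testBit_eq
    intro k
    rw [Nat.testBit_land]
    cases hck : c.testBit k
    · simp
    · simp [h k hck]

lemma bitFinset_subset_iff {c t : ℕ} : bitFinset c ⊆ bitFinset t ↔ c &&& t = c := by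
  rw [and_eq_left_iff']
  constructor
  · intro h k hk
    have := h (mem_bitFinset_iff.mpr hk)
    exact mem_bitFinset_iff.mp this
  · intro h a ha
    exact mem_bitFinset_iff.mpr (h a (mem_bitFinset_iff.mp ha))

lemma bitFinset_disjoint_iff {i j : ℕ} : Disjoint (bitFinset i) (bitFinset j) ↔ i &&& j = 0 := by
  rw [Finset.disjoint_left]
  constructor
  · intro h
    apply Nat.eq_of_testBit_eq
    intro k
    simp only [Nat.testBit_land, Nat.zero_testBit]
    cases hik : i.testBit k
    · simp
    · simp only [Bool.true_and]
      by_contra hjk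
      simp only [Bool.not_eq_false] at hjk
      exact h (mem_bitFinset_iff.mpr hik) (mem_bitFinset_iff.mpr hjk)
  · intro h a ha hb
    have h1 := mem_bitFinset_iff.mp ha
    have h2 := mem_bitFinset_iff.mp hb
    have := congrArg (Nat.testBit · a) h
    simp [Nat.testBit_land, h1, h2] at this

lemma popcount_eq_card (m : ℕ) : popcount m = (bitFinset m).card := by
  rw [bitFinset, List.card_toFinset, List.Nodup.dedup (List.SortedLT.nodup (Nat.bitIndices_sorted))]
  -- popcount m = length of bitIndices
  induction' m using Nat.binaryRec with b m ih
  · simp [popcount]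
  · cases b
    · rw [Nat.bit_false, Nat.bitIndices_two_mul, List.length_map]
      rcases Nat.eq_zero_or_pos m with h | h
      · subst h; simpa using ih
      · rw [popcount, Nat.bit0_bits m (by omega), List.count_cons]
        simpa [popcount] using ih
    · rw [Nat.bit_true, Nat.bitIndices_two_mul_add_one]
      rw [popcount, Nat.bit1_bits, List.count_cons]
      simpa [popcount] using ih

lemma bitFinset_lt_two_pow {m n : ℕ} (h : m < 2^n) : bitFinset m ⊆ Finset.range n := by
  intro a ha
  rw [Finset.mem_range]
  by_contra hc
  have := Nat.testBit_lt_two_pow (x := m) (i := a) (lt_of_lt_of_le h (Nat.pow_le_pow_right (by norm_num) (by omega)))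
  rw [mem_bitFinset_iff] at ha
  simp_all

lemma two_pow_le_of_mem_bitFinset {m n : ℕ} (h : bitFinset m ⊆ Finset.range n) : m < 2^n := by
  apply Nat.lt_pow_two_of_testBit
  intro i hi
  by_contra hc
  simp only [Bool.not_eq_false] at hc
  have := h (mem_bitFinset_iff.mpr hc)
  rw [Finset.mem_range] at this
  omega


open Finset

lemma zmod2_cases : ∀ a : ZMod 2, a = 0 ∨ a = 1 := by decide

lemma zmod2_pow_card {k : ℕ} : ((2^k : ℕ) : ZMod 2) = if k = 0 then 1 else 0 := by
  rw [Nat.cast_pow]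
  have h2 : ((2:ℕ) : ZMod 2) = 0 := rfl
  rw [h2]
  cases k with
  | zero => simp
  | succ k => simp

/-- the core function -/
def Fc (A B : Finset ℕ) (𝒯 : Finset (Finset ℕ)) (w : Finset ℕ) : ZMod 2 :=
  (if w ⊆ A then 1 else 0) + (if w ⊆ B then 1 else 0) + ∑ t ∈ 𝒯, (if w ⊆ t then 1 else 0)

/-- its support inside the powerset of the universe `N` -/
def Sc (N A B : Finset ℕ) (𝒯 : Finset (Finset ℕ)) : Finset (Finset ℕ) :=
  N.powerset.filter (fun w => Fc A B 𝒯 w ≠ 0)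

lemma Fc_comm (A B : Finset ℕ) (𝒯 : Finset (Finset ℕ)) (w : Finset ℕ) :
    Fc A B 𝒯 w = Fc B A 𝒯 w := by
  unfold Fc; ring

lemma Sc_comm (N A B : Finset ℕ) (𝒯 : Finset (Finset ℕ)) : Sc N A B 𝒯 = Sc N B A 𝒯 := by
  unfold Sc; simp only [Fc_comm]

-- Key counting lemma
lemma KL {N t : Finset ℕ} (ht : t ⊆ N) (c : Finset ℕ) :
    (∑ w ∈ Finset.Icc c N, (if w ⊆ t then (1 : ZMod 2) else 0)) = if c = t then 1 else 0 := by
  rw [Finset.sum_boole]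
  have hfilter : (Finset.Icc c N).filter (fun w => w ⊆ t) = Finset.Icc c t := by
    ext w
    simp only [Finset.mem_filter, Finset.mem_Icc, Finset.le_iff_subset]
    exact ⟨fun h => ⟨h.1.1, h.2⟩, fun h => ⟨⟨h.1, h.2.trans ht⟩, h.2⟩⟩
  rw [hfilter]
  by_cases hct : c ⊆ t
  · rw [Finset.card_Icc_finset hct, zmod2_pow_card]
    by_cases hceq : c = t
    · simp [hceq]
    · have : c ⊂ t := ssubset_of_ne_of_subset hceq hct
      have : c.card < t.card := Finset.card_lt_card this
      simp only [hceq, if_false]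
      rw [if_neg (by omega)]
  · rw [Finset.Icc_eq_empty (by simpa [Finset.le_iff_subset] using hct)]
    have : c ≠ t := fun h => hct (h ▸ subset_refl c)
    simp [this]

-- zeta lemma
lemma zeta {N A B : Finset ℕ} {𝒯 : Finset (Finset ℕ)} (hA : A ⊆ N) (hB : B ⊆ N)
    (h𝒯 : ∀ t ∈ 𝒯, t ⊆ N) (c : Finset ℕ) :
    (((Sc N A B 𝒯).filter (fun w => c ⊆ w)).card : ZMod 2) =
      (if c = A then 1 else 0) + (if c = B then 1 else 0) + ∑ t ∈ 𝒯, (if c = t then 1 else 0) := by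
  have h1 : (Sc N A B 𝒯).filter (fun w => c ⊆ w) =
      (Finset.Icc c N).filter (fun w => Fc A B 𝒯 w ≠ 0) := by
    ext w
    simp only [Sc, Finset.mem_filter, Finset.mem_powerset, Finset.mem_Icc, Finset.le_iff_subset]
    tauto
  have h2 : (((Finset.Icc c N).filter (fun w => Fc A B 𝒯 w ≠ 0)).card : ZMod 2)
      = ∑ w ∈ Finset.Icc c N, Fc A B 𝒯 w := by
    rw [← Finset.sum_filter_ne_zero]
    have h3 : ∑ w ∈ (Finset.Icc c N).filter (fun w => Fc A B 𝒯 w ≠ 0), Fc A B 𝒯 w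
        = ∑ _w ∈ (Finset.Icc c N).filter (fun w => Fc A B 𝒯 w ≠ 0), (1 : ZMod 2) := by
      refine Finset.sum_congr rfl (fun w hw => ?_)
      rcases zmod2_cases (Fc A B 𝒯 w) with h | h
      · exact absurd h (Finset.mem_filter.mp hw).2
      · exact h
    rw [h3, Finset.sum_const, nsmul_eq_mul, mul_one]
  rw [h1, h2]
  unfold Fc
  rw [Finset.sum_add_distrib, Finset.sum_add_distrib, KL hA, KL hB]
  congr 1
  rw [Finset.sum_comm]
  exact Finset.sum_congr rfl (fun t h => KL (h𝒯 t h) c)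

-- the swap / Möbius lemma
lemma swap_lemma (S : Finset (Finset ℕ)) (A a u : Finset ℕ) (hu : Disjoint u A) :
    ∑ c ∈ Finset.Icc a A, ((S.filter (fun w => c ∪ u ⊆ w)).card : ZMod 2)
      = ((S.filter (fun w => w ∩ A = a ∧ u ⊆ w)).card : ZMod 2) := by
  have step1 : ∑ c ∈ Finset.Icc a A, ((S.filter (fun w => c ∪ u ⊆ w)).card : ZMod 2)
      = ∑ w ∈ S, ∑ c ∈ Finset.Icc a A, (if c ∪ u ⊆ w then (1 : ZMod 2) else 0) := by
    rw [Finset.sum_comm]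
    exact Finset.sum_congr rfl fun c _ => (Finset.sum_boole _ _).symm
  rw [step1, ← Finset.sum_boole]
  refine Finset.sum_congr rfl fun w _ => ?_
  by_cases huw : u ⊆ w
  · have hcond : ∀ c, (c ∪ u ⊆ w) = (c ⊆ w) := by
      intro c
      simp only [Finset.union_subset_iff, huw, and_true]
    simp only [hcond]
    have : ∑ c ∈ Finset.Icc a A, (if c ⊆ w then (1 : ZMod 2) else 0)
        = (((Finset.Icc a A).filter (fun c => c ⊆ w)).card : ZMod 2) := Finset.sum_boole _ _
    rw [this]
    have hfilt : (Finset.Icc a A).filter (fun c => c ⊆ w) = Finset.Icc a (A ∩ w) := by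
      ext c
      simp only [Finset.mem_filter, Finset.mem_Icc, Finset.le_iff_subset,
        Finset.subset_inter_iff]
      tauto
    rw [hfilt]
    by_cases haw : a ⊆ A ∩ w
    · rw [Finset.card_Icc_finset haw, zmod2_pow_card]
      by_cases heq : A ∩ w = a
      · have : w ∩ A = a := by rwa [Finset.inter_comm] at heq
        simp [heq, this, huw]
      · have hne : (A ∩ w).card - a.card ≠ 0 := by
          have hss : a ⊂ A ∩ w := ssubset_of_ne_of_subset (fun h => heq h.symm) haw
          have := Finset.card_lt_card hss
          omega
        have : ¬ (w ∩ A = a ∧ u ⊆ w) := by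
          rintro ⟨h1, -⟩
          exact heq (by rwa [Finset.inter_comm] at h1)
        simp [hne, this]
    · rw [Finset.Icc_eq_empty (by simpa [Finset.le_iff_subset] using haw)]
      have : ¬ (w ∩ A = a ∧ u ⊆ w) := by
        rintro ⟨h1, -⟩
        exact haw (by rw [Finset.inter_comm, h1])
      simp [this]
  · have h0 : ∀ c ∈ Finset.Icc a A, (if c ∪ u ⊆ w then (1 : ZMod 2) else 0) = 0 := by
      intro c _
      have : ¬ (c ∪ u ⊆ w) := fun h => huw ((Finset.subset_union_right).trans h)
      simp [this]
    rw [Finset.sum_congr rfl h0, Finset.sum_const_zero]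
    simp [huw]

section parity
variable {N A B : Finset ℕ} {𝒯 : Finset (Finset ℕ)} {ℓ : ℕ}

lemma classPar (hA : A ⊆ N) (hB : B ⊆ N) (hcA : A.card = ℓ) (hcB : B.card = ℓ)
    (hAB : A ≠ B) (h𝒯 : ∀ t ∈ 𝒯, t ⊆ N ∧ ℓ + 1 ≤ t.card)
    {a : Finset ℕ} (ha : a ⊆ A) :
    (((Sc N A B 𝒯).filter (fun w => w ∩ A = a)).card : ZMod 2) = 1 := by
  have hswap := swap_lemma (Sc N A B 𝒯) A a ∅ (Finset.disjoint_empty_left A)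
  simp only [Finset.union_empty, Finset.empty_subset, and_true] at hswap
  rw [← hswap]
  have hz : ∀ c ∈ Finset.Icc a A, (((Sc N A B 𝒯).filter (fun w => c ⊆ w)).card : ZMod 2)
      = (if c = A then 1 else 0) + (if c = B then 1 else 0) + ∑ t ∈ 𝒯, (if c = t then 1 else 0) :=
    fun c _ => zeta hA hB (fun t ht => (h𝒯 t ht).1) c
  rw [Finset.sum_congr rfl hz]
  rw [Finset.sum_add_distrib, Finset.sum_add_distrib]
  have e1 : ∑ c ∈ Finset.Icc a A, (if c = A then (1 : ZMod 2) else 0) = 1 := by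
    rw [Finset.sum_ite_eq' (Finset.Icc a A) A (fun _ => (1 : ZMod 2))]
    rw [if_pos (Finset.mem_Icc.mpr ⟨Finset.le_iff_subset.mpr ha, le_refl A⟩)]
  have e2 : ∑ c ∈ Finset.Icc a A, (if c = B then (1 : ZMod 2) else 0) = 0 := by
    apply Finset.sum_eq_zero
    intro c hc
    have : c ≠ B := by
      rintro rfl
      rw [Finset.mem_Icc] at hc
      exact hAB (Finset.eq_of_subset_of_card_le (Finset.le_iff_subset.mp hc.2) (by omega)).symm
    simp [this]
  have e3 : ∑ c ∈ Finset.Icc a A, ∑ t ∈ 𝒯, (if c = t then (1 : ZMod 2) else 0) = 0 := by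
    apply Finset.sum_eq_zero
    intro c hc
    apply Finset.sum_eq_zero
    intro t ht
    have : c ≠ t := by
      rintro rfl
      rw [Finset.mem_Icc] at hc
      have h1 : c.card ≤ A.card := Finset.card_le_card (Finset.le_iff_subset.mp hc.2)
      have h2 := (h𝒯 c ht).2
      omega
    simp [this]
  rw [e1, e2, e3]
  ring
end parity

section parity2
variable {N A B : Finset ℕ} {𝒯 : Finset (Finset ℕ)} {ℓ : ℕ}

lemma psiPar (hA : A ⊆ N) (hB : B ⊆ N) (hdisj : Disjoint A B)
    (hcA : A.card = ℓ) (hcB : B.card = ℓ) (hl2 : 2 ≤ ℓ)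
    (h𝒯 : ∀ t ∈ 𝒯, t ⊆ N ∧ ℓ + 1 ≤ t.card)
    {a : Finset ℕ} (ha : a ⊆ A) {y : ℕ} (hy : y ∈ B) :
    (((Sc N A B 𝒯).filter (fun w => w ∩ A = a ∧ {y} ⊆ w)).card : ZMod 2) =
      if A ∪ {y} ∈ 𝒯 then 1 else 0 := by
  have hyA : y ∉ A := fun h => (Finset.disjoint_left.mp hdisj h) hy
  have hswap := swap_lemma (Sc N A B 𝒯) A a {y} (by simp [Finset.disjoint_left, hyA])
  rw [← hswap]
  have hz : ∀ c ∈ Finset.Icc a A, (((Sc N A B 𝒯).filter (fun w => c ∪ {y} ⊆ w)).card : ZMod 2)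
      = (if c ∪ {y} = A then 1 else 0) + (if c ∪ {y} = B then 1 else 0)
        + ∑ t ∈ 𝒯, (if c ∪ {y} = t then 1 else 0) := by
    intro c _
    have h1 : (Sc N A B 𝒯).filter (fun w => c ∪ {y} ⊆ w)
        = (Sc N A B 𝒯).filter (fun w => (c ∪ {y}) ⊆ w) := rfl
    rw [h1]
    exact zeta hA hB (fun t ht => (h𝒯 t ht).1) (c ∪ {y})
  rw [Finset.sum_congr rfl hz]
  rw [Finset.sum_add_distrib, Finset.sum_add_distrib]
  have e1 : ∑ c ∈ Finset.Icc a A, (if c ∪ {y} = A then (1 : ZMod 2) else 0) = 0 := by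
    apply Finset.sum_eq_zero
    intro c _
    have : c ∪ {y} ≠ A := by
      intro h
      exact hyA (h ▸ Finset.mem_union_right c (Finset.mem_singleton_self y))
    rw [if_neg this]
  have e2 : ∑ c ∈ Finset.Icc a A, (if c ∪ {y} = B then (1 : ZMod 2) else 0) = 0 := by
    apply Finset.sum_eq_zero
    intro c hc
    rw [Finset.mem_Icc] at hc
    have : c ∪ {y} ≠ B := by
      intro h
      have hcB' : c ⊆ B := h ▸ Finset.subset_union_left
      have hcA' : c ⊆ A := Finset.le_iff_subset.mp hc.2
      have hcempty : c = ∅ := by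
        have := Finset.disjoint_left.mp hdisj
        ext z
        simp only [Finset.notMem_empty, iff_false]
        intro hz
        exact (this (hcA' hz)) (hcB' hz)
      rw [hcempty, Finset.empty_union] at h
      have : B.card = 1 := by rw [← h]; simp
      omega
    rw [if_neg this]
  have e3 : ∑ c ∈ Finset.Icc a A, ∑ t ∈ 𝒯, (if c ∪ {y} = t then (1 : ZMod 2) else 0)
      = if A ∪ {y} ∈ 𝒯 then 1 else 0 := by
    rw [Finset.sum_comm]
    have inner : ∀ t ∈ 𝒯, ∑ c ∈ Finset.Icc a A, (if c ∪ {y} = t then (1 : ZMod 2) else 0)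
        = if t = A ∪ {y} then 1 else 0 := by
      intro t ht
      by_cases hteq : t = A ∪ {y}
      · subst hteq
        rw [if_pos rfl]
        have huniq : ∀ c ∈ Finset.Icc a A, (c ∪ {y} = A ∪ {y}) ↔ c = A := by
          intro c hc
          rw [Finset.mem_Icc] at hc
          constructor
          · intro h
            have hcA' : c ⊆ A := Finset.le_iff_subset.mp hc.2
            apply Finset.eq_of_subset_of_card_le hcA'
            -- A.card ≤ c.card since A ⊆ c ∪ {y} and y ∉ A means A ⊆ c
            have hAc : A ⊆ c := by
              intro z hz
              have : z ∈ c ∪ {y} := h ▸ Finset.mem_union_left {y} hz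
              rcases Finset.mem_union.mp this with h' | h'
              · exact h'
              · rw [Finset.mem_singleton] at h'
                exact absurd (h' ▸ hz) hyA
            exact Finset.card_le_card hAc
          · rintro rfl; rfl
        calc ∑ c ∈ Finset.Icc a A, (if c ∪ {y} = A ∪ {y} then (1 : ZMod 2) else 0)
            = ∑ c ∈ Finset.Icc a A, (if c = A then (1 : ZMod 2) else 0) :=
              Finset.sum_congr rfl (fun c hc => if_congr (huniq c hc) rfl rfl)
          _ = 1 := by
              rw [Finset.sum_ite_eq' (Finset.Icc a A) A (fun _ => (1 : ZMod 2))]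
              rw [if_pos (Finset.mem_Icc.mpr ⟨Finset.le_iff_subset.mpr ha, le_refl A⟩)]
      · rw [if_neg hteq]
        apply Finset.sum_eq_zero
        intro c hc
        rw [Finset.mem_Icc] at hc
        have : c ∪ {y} ≠ t := by
          intro h
          -- c = t.erase y, c ⊆ A, t.card ≥ ℓ+1 forces c = A, t = A ∪ {y}
          apply hteq
          have hcA' : c ⊆ A := Finset.le_iff_subset.mp hc.2
          have hyc : y ∉ c := fun hz => hyA (hcA' hz)
          have hcard : t.card ≤ c.card + 1 := by
            rw [← h]
            exact le_trans (Finset.card_union_le c {y}) (by simp)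
          have h2 := (h𝒯 t ht).2
          have h3 : c.card ≤ A.card := Finset.card_le_card hcA'
          have hceq : c = A := Finset.eq_of_subset_of_card_le hcA' (by omega)
          rw [← h, hceq]
        rw [if_neg this]
    rw [Finset.sum_congr rfl inner]
    rw [Finset.sum_ite_eq' 𝒯 (A ∪ {y}) (fun _ => (1 : ZMod 2))]
  rw [e1, e2, e3]
  ring
end parity2

lemma cast_eq_one_parity {m : ℕ} (h : (m : ZMod 2) = 1) : m % 2 = 1 := by
  rcases Nat.mod_two_eq_zero_or_one m with h0 | h1
  · exfalso
    have : ((m % 2 : ℕ) : ZMod 2) = (m : ZMod 2) := ZMod.natCast_mod m 2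
    rw [h0] at this
    simp only [Nat.cast_zero] at this
    rw [h] at this
    exact one_ne_zero this.symm
  · exact h1

section align
variable {N A B : Finset ℕ} {𝒯 : Finset (Finset ℕ)} {ℓ : ℕ}

lemma pure_align (hA : A ⊆ N) (hB : B ⊆ N) (hdisj : Disjoint A B)
    (hcA : A.card = ℓ) (hcB : B.card = ℓ) (hl2 : 2 ≤ ℓ)
    (h𝒯 : ∀ t ∈ 𝒯, t ⊆ N ∧ ℓ + 1 ≤ t.card)
    {a w : Finset ℕ} (ha : a ⊆ A)
    (hw : (Sc N A B 𝒯).filter (fun w' => w' ∩ A = a) = {w}) :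
    w ∩ B = B.filter (fun y => A ∪ {y} ∈ 𝒯) := by
  ext y
  simp only [Finset.mem_inter, Finset.mem_filter]
  constructor
  · rintro ⟨hyw, hyB⟩
    refine ⟨hyB, ?_⟩
    have hpsi := psiPar hA hB hdisj hcA hcB hl2 h𝒯 ha hyB
    have hcard : ((Sc N A B 𝒯).filter (fun w' => w' ∩ A = a ∧ {y} ⊆ w')).card = 1 := by
      have : (Sc N A B 𝒯).filter (fun w' => w' ∩ A = a ∧ {y} ⊆ w')
          = ({w} : Finset (Finset ℕ)).filter (fun w' => {y} ⊆ w') := by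
        rw [← hw, Finset.filter_filter]
      rw [this, Finset.filter_singleton, if_pos (Finset.singleton_subset_iff.mpr hyw)]
      simp
    rw [hcard] at hpsi
    simp only [Nat.cast_one] at hpsi
    by_contra hmem
    rw [if_neg hmem] at hpsi
    exact one_ne_zero hpsi
  · rintro ⟨hyB, hmem⟩
    refine ⟨?_, hyB⟩
    have hpsi := psiPar hA hB hdisj hcA hcB hl2 h𝒯 ha hyB
    rw [if_pos hmem] at hpsi
    have : (Sc N A B 𝒯).filter (fun w' => w' ∩ A = a ∧ {y} ⊆ w')
        = ({w} : Finset (Finset ℕ)).filter (fun w' => {y} ⊆ w') := by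
      rw [← hw, Finset.filter_filter]
    rw [this, Finset.filter_singleton] at hpsi
    by_cases hyw : {y} ⊆ w
    · exact Finset.singleton_subset_iff.mp hyw
    · rw [if_neg hyw] at hpsi
      simp at hpsi

end align

-- the one-sided counting inequality
lemma count_ineq (S : Finset (Finset ℕ)) (X β : Finset ℕ) (ℓ : ℕ)
    (hβ : β ⊆ X) (hcX : X.card = ℓ)
    (hodd : ∀ a ∈ X.powerset, (S.filter (fun w => w ∩ X = a)).card % 2 = 1)
    (KC : ℕ) (hKC : KC ≤ (S.filter (fun w => w ∩ X = β)).card) :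
    KC + 3 * 2 ^ ℓ ≤ S.card
      + 2 * ((X.powerset.filter (fun a => (S.filter (fun w => w ∩ X = a)).card = 1)).card)
      + 3 := by
  classical
  have hβP : β ∈ X.powerset := Finset.mem_powerset.mpr hβ
  have hfib : S.card = ∑ a ∈ X.powerset, (S.filter (fun w => w ∩ X = a)).card := by
    apply Finset.card_eq_sum_card_fiberwise
    intro w _
    exact Finset.mem_powerset.mpr Finset.inter_subset_right
  have hsplit : S.card = (S.filter (fun w => w ∩ X = β)).card
      + ∑ a ∈ X.powerset.erase β, (S.filter (fun w => w ∩ X = a)).card := by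
    rw [hfib, ← Finset.add_sum_erase _ _ hβP]
  have hge : ∑ a ∈ X.powerset.erase β, (S.filter (fun w => w ∩ X = a)).card
      ≥ ((X.powerset.erase β).filter (fun a => (S.filter (fun w => w ∩ X = a)).card = 1)).card
        + 3 * ((X.powerset.erase β).filter
            (fun a => ¬ (S.filter (fun w => w ∩ X = a)).card = 1)).card := by
    have h1 : ∑ a ∈ X.powerset.erase β, (S.filter (fun w => w ∩ X = a)).card
        ≥ ∑ a ∈ X.powerset.erase β,
            (if (S.filter (fun w => w ∩ X = a)).card = 1 then 1 else 3) := by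
      apply Finset.sum_le_sum
      intro a ha
      have hodd' := hodd a (Finset.mem_erase.mp ha).2
      by_cases h1 : (S.filter (fun w => w ∩ X = a)).card = 1
      · simp [h1]
      · rw [if_neg h1]
        omega
    calc ∑ a ∈ X.powerset.erase β, (S.filter (fun w => w ∩ X = a)).card
        ≥ ∑ a ∈ X.powerset.erase β,
            (if (S.filter (fun w => w ∩ X = a)).card = 1 then 1 else 3) := h1
      _ = _ := by
          rw [Finset.sum_ite, Finset.sum_const, Finset.sum_const, smul_eq_mul, smul_eq_mul,
            mul_one, mul_comm]
  have hk1E : ((X.powerset.erase β).filter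
        (fun a => (S.filter (fun w => w ∩ X = a)).card = 1)).card
      + ((X.powerset.erase β).filter
        (fun a => ¬ (S.filter (fun w => w ∩ X = a)).card = 1)).card
      = (X.powerset.erase β).card :=
    Finset.card_filter_add_card_filter_not _
  have hcarderase : (X.powerset.erase β).card + 1 = 2 ^ ℓ := by
    rw [Finset.card_erase_of_mem hβP, Finset.card_powerset, hcX]
    have : 0 < 2 ^ ℓ := Nat.pow_pos (by norm_num)
    omega
  have hk1le : ((X.powerset.erase β).filter
        (fun a => (S.filter (fun w => w ∩ X = a)).card = 1)).card
      ≤ ((X.powerset.filter (fun a => (S.filter (fun w => w ∩ X = a)).card = 1))).card := by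
    apply Finset.card_le_card
    intro a ha
    rw [Finset.mem_filter] at ha ⊢
    exact ⟨(Finset.mem_erase.mp ha.1).2, ha.2⟩
  omega

section main
variable {N A B : Finset ℕ} {𝒯 : Finset (Finset ℕ)} {ℓ : ℕ}

theorem core_bound (hA : A ⊆ N) (hB : B ⊆ N) (hdisj : Disjoint A B)
    (hcA : A.card = ℓ) (hcB : B.card = ℓ) (hAB : A ≠ B) (hl : 1 ≤ ℓ)
    (h𝒯 : ∀ t ∈ 𝒯, t ⊆ N ∧ ℓ + 1 ≤ t.card) :
    2 ^ (ℓ + 1) - 2 ≤ (Sc N A B 𝒯).card := by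
  classical
  set S := Sc N A B 𝒯 with hS
  have hoddA : ∀ a ∈ A.powerset, (S.filter (fun w => w ∩ A = a)).card % 2 = 1 := by
    intro a ha
    exact cast_eq_one_parity (classPar hA hB hcA hcB hAB h𝒯 (Finset.mem_powerset.mp ha))
  have hoddB : ∀ b ∈ B.powerset, (S.filter (fun w => w ∩ B = b)).card % 2 = 1 := by
    intro b hb
    have := classPar hB hA hcB hcA (Ne.symm hAB) h𝒯 (Finset.mem_powerset.mp hb)
    rw [← Sc_comm] at this
    exact cast_eq_one_parity this
  -- S.card is even
  have hfibA : S.card = ∑ a ∈ A.powerset, (S.filter (fun w => w ∩ A = a)).card := by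
    apply Finset.card_eq_sum_card_fiberwise
    intro w _
    exact Finset.mem_powerset.mpr Finset.inter_subset_right
  have heven : S.card % 2 = 0 := by
    have hcast : (S.card : ZMod 2) = 0 := by
      rw [hfibA, Nat.cast_sum]
      have hone : ∀ a ∈ A.powerset, (((S.filter (fun w => w ∩ A = a)).card : ℕ) : ZMod 2) = 1 := by
        intro a ha
        exact classPar hA hB hcA hcB hAB h𝒯 (Finset.mem_powerset.mp ha)
      rw [Finset.sum_congr rfl hone, Finset.sum_const, Finset.card_powerset, hcA,
        nsmul_eq_mul, mul_one, zmod2_pow_card, if_neg (by omega)]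
    rcases Nat.mod_two_eq_zero_or_one S.card with h | h
    · exact h
    · exfalso
      have hmm : ((S.card % 2 : ℕ) : ZMod 2) = (S.card : ZMod 2) := ZMod.natCast_mod _ 2
      rw [h, hcast] at hmm
      simp at hmm
  by_cases hl2 : 2 ≤ ℓ
  · -- main case
    set α := A.filter (fun x => B ∪ {x} ∈ 𝒯) with hα
    set Λ := B.filter (fun y => A ∪ {y} ∈ 𝒯) with hΛ
    set k := (A.powerset.filter (fun a => (S.filter (fun w => w ∩ A = a)).card = 1)).card with hk
    set kc := (B.powerset.filter (fun b => (S.filter (fun w => w ∩ B = b)).card = 1)).card with hkc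
    -- injection from pure B classes into the fiber over α
    have hI1 : kc ≤ (S.filter (fun w => w ∩ A = α)).card := by
      set f : Finset ℕ → Finset ℕ := fun b =>
        if h : ∃ w, S.filter (fun w' => w' ∩ B = b) = {w} then h.choose else ∅ with hf
      apply Finset.card_le_card_of_injOn f
      · intro b hb
        rw [Finset.mem_coe, Finset.mem_filter] at hb
        have hex : ∃ w, S.filter (fun w' => w' ∩ B = b) = {w} := Finset.card_eq_one.mp hb.2
        have hfb : f b = hex.choose := by rw [hf]; simp [hex]
        have hspec := hex.choose_spec
        have hmem : f b ∈ S.filter (fun w' => w' ∩ B = b) := by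
          rw [hspec, hfb]; exact Finset.mem_singleton_self _
        rw [Finset.mem_filter] at hmem
        rw [Finset.mem_coe, Finset.mem_filter]
        refine ⟨hmem.1, ?_⟩
        have halign := pure_align hB hA hdisj.symm hcB hcA hl2 h𝒯
          (Finset.mem_powerset.mp hb.1) (by rw [← Sc_comm]; rw [← hfb] at hspec; exact hspec)
        rw [halign, ← hα]
      · intro b1 hb1 b2 hb2 heq
        rw [Finset.coe_filter, Set.mem_setOf_eq] at hb1 hb2
        have hex1 : ∃ w, S.filter (fun w' => w' ∩ B = b1) = {w} := Finset.card_eq_one.mp hb1.2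
        have hex2 : ∃ w, S.filter (fun w' => w' ∩ B = b2) = {w} := Finset.card_eq_one.mp hb2.2
        have hfb1 : f b1 = hex1.choose := by rw [hf]; simp [hex1]
        have hfb2 : f b2 = hex2.choose := by rw [hf]; simp [hex2]
        have m1 : f b1 ∈ S.filter (fun w' => w' ∩ B = b1) := by
          rw [hex1.choose_spec, hfb1]; exact Finset.mem_singleton_self _
        have m2 : f b2 ∈ S.filter (fun w' => w' ∩ B = b2) := by
          rw [hex2.choose_spec, hfb2]; exact Finset.mem_singleton_self _
        rw [Finset.mem_filter] at m1 m2
        rw [← m1.2, ← m2.2, heq]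
    -- injection from pure A classes into the fiber over Λ
    have hI2 : k ≤ (S.filter (fun w => w ∩ B = Λ)).card := by
      set f : Finset ℕ → Finset ℕ := fun a =>
        if h : ∃ w, S.filter (fun w' => w' ∩ A = a) = {w} then h.choose else ∅ with hf
      apply Finset.card_le_card_of_injOn f
      · intro a ha
        rw [Finset.mem_coe, Finset.mem_filter] at ha
        have hex : ∃ w, S.filter (fun w' => w' ∩ A = a) = {w} := Finset.card_eq_one.mp ha.2
        have hfa : f a = hex.choose := by rw [hf]; simp [hex]
        have hspec := hex.choose_spec
        have hmem : f a ∈ S.filter (fun w' => w' ∩ A = a) := by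
          rw [hspec, hfa]; exact Finset.mem_singleton_self _
        rw [Finset.mem_filter] at hmem
        rw [Finset.mem_coe, Finset.mem_filter]
        refine ⟨hmem.1, ?_⟩
        have halign := pure_align hA hB hdisj hcA hcB hl2 h𝒯
          (Finset.mem_powerset.mp ha.1) (by rw [← hfa] at hspec; exact hspec)
        rw [halign, ← hΛ]
      · intro a1 ha1 a2 ha2 heq
        rw [Finset.coe_filter, Set.mem_setOf_eq] at ha1 ha2
        have hex1 : ∃ w, S.filter (fun w' => w' ∩ A = a1) = {w} := Finset.card_eq_one.mp ha1.2
        have hex2 : ∃ w, S.filter (fun w' => w' ∩ A = a2) = {w} := Finset.card_eq_one.mp ha2.2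
        have hfa1 : f a1 = hex1.choose := by rw [hf]; simp [hex1]
        have hfa2 : f a2 = hex2.choose := by rw [hf]; simp [hex2]
        have m1 : f a1 ∈ S.filter (fun w' => w' ∩ A = a1) := by
          rw [hex1.choose_spec, hfa1]; exact Finset.mem_singleton_self _
        have m2 : f a2 ∈ S.filter (fun w' => w' ∩ A = a2) := by
          rw [hex2.choose_spec, hfa2]; exact Finset.mem_singleton_self _
        rw [Finset.mem_filter] at m1 m2
        rw [← m1.2, ← m2.2, heq]
    have hEA := count_ineq S A α ℓ (Finset.filter_subset _ _) hcA hoddA kc hI1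
    have hEB := count_ineq S B Λ ℓ (Finset.filter_subset _ _) hcB hoddB k hI2
    have hkb : k ≤ 2 ^ ℓ := by
      rw [hk]
      calc (A.powerset.filter _).card ≤ A.powerset.card := Finset.card_filter_le _ _
        _ = 2 ^ ℓ := by rw [Finset.card_powerset, hcA]
    have hkcb : kc ≤ 2 ^ ℓ := by
      rw [hkc]
      calc (B.powerset.filter _).card ≤ B.powerset.card := Finset.card_filter_le _ _
        _ = 2 ^ ℓ := by rw [Finset.card_powerset, hcB]
    have hpow : 2 ^ (ℓ + 1) = 2 * 2 ^ ℓ := by rw [pow_succ]; ring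
    have hEA' : kc + 3 * 2 ^ ℓ ≤ S.card + 2 * k + 3 := hEA
    have hEB' : k + 3 * 2 ^ ℓ ≤ S.card + 2 * kc + 3 := hEB
    omega
  · -- ℓ = 1 case
    have hl1 : ℓ = 1 := by omega
    have h1 : 1 ≤ (S.filter (fun w => w ∩ A = A)).card := by
      have := hoddA A (Finset.mem_powerset.mpr (subset_refl A))
      omega
    have h2 : (S.filter (fun w => w ∩ A = A)).card ≤ S.card :=
      Finset.card_le_card (Finset.filter_subset _ _)
    rw [hl1]
    omega

end main

section pairweight
variable {N A B : Finset ℕ} {ℓ : ℕ}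

lemma Sc_empty_card (hA : A ⊆ N) (hB : B ⊆ N) (hdisj : Disjoint A B)
    (hcA : A.card = ℓ) (hcB : B.card = ℓ) :
    (Sc N A B ∅).card = 2 ^ (ℓ + 1) - 2 := by
  classical
  have hset : Sc N A B ∅ = (A.powerset ∪ B.powerset).erase ∅ := by
    ext w
    simp only [Sc, Fc, Finset.sum_empty, add_zero, Finset.mem_filter, Finset.mem_powerset,
      Finset.mem_erase, Finset.mem_union]
    constructor
    · rintro ⟨hwN, hne⟩
      by_cases hwa : w ⊆ A <;> by_cases hwb : w ⊆ B
      · exfalso; rw [if_pos hwa, if_pos hwb] at hne; exact hne (by decide)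
      · refine ⟨?_, Or.inl hwa⟩
        rintro rfl
        exact hwb (Finset.empty_subset B)
      · refine ⟨?_, Or.inr hwb⟩
        rintro rfl
        exact hwa (Finset.empty_subset A)
      · exfalso; rw [if_neg hwa, if_neg hwb] at hne; exact hne (by decide)
    · rintro ⟨hne, hw⟩
      have hnotboth : ¬ (w ⊆ A ∧ w ⊆ B) := by
        rintro ⟨h1, h2⟩
        apply hne
        rw [← Finset.subset_empty]
        intro z hz
        exact absurd (h2 hz) (Finset.disjoint_left.mp hdisj (h1 hz))
      rcases hw with hwa | hwb
      · have hwb : ¬ w ⊆ B := fun h => hnotboth ⟨hwa, h⟩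
        exact ⟨hwa.trans hA, by rw [if_pos hwa, if_neg hwb]; decide⟩
      · have hwa : ¬ w ⊆ A := fun h => hnotboth ⟨h, hwb⟩
        exact ⟨hwb.trans hB, by rw [if_neg hwa, if_pos hwb]; decide⟩
  rw [hset]
  have hmem : ∅ ∈ A.powerset ∪ B.powerset :=
    Finset.mem_union_left _ (Finset.mem_powerset.mpr (Finset.empty_subset A))
  rw [Finset.card_erase_of_mem hmem]
  have hinter : A.powerset ∩ B.powerset = {∅} := by
    ext w
    simp only [Finset.mem_inter, Finset.mem_powerset, Finset.mem_singleton]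
    constructor
    · rintro ⟨h1, h2⟩
      rw [← Finset.subset_empty]
      intro z hz
      exact absurd (h2 hz) (Finset.disjoint_left.mp hdisj (h1 hz))
    · rintro rfl
      exact ⟨Finset.empty_subset A, Finset.empty_subset B⟩
  have hcu := Finset.card_union_add_card_inter A.powerset B.powerset
  rw [hinter, Finset.card_singleton, Finset.card_powerset, Finset.card_powerset, hcA, hcB] at hcu
  have hpow : 2 ^ (ℓ + 1) = 2 * 2 ^ ℓ := by rw [pow_succ]; ring
  omega

end pairweight

-- surjectivity of bitFinset from Fin (2^n) onto powerset (range n)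
lemma bitFinset_surj (n : ℕ) {w : Finset ℕ} (hw : w ∈ (Finset.range n).powerset) :
    ∃ c : Fin (2^n), bitFinset (c : ℕ) = w := by
  classical
  have himg : (Finset.univ : Finset (Fin (2^n))).image (fun c : Fin (2^n) => bitFinset c.val)
      = (Finset.range n).powerset := by
    apply Finset.eq_of_subset_of_card_le
    · intro x hx
      rw [Finset.mem_image] at hx
      obtain ⟨c, _, rfl⟩ := hx
      exact Finset.mem_powerset.mpr (bitFinset_lt_two_pow c.isLt)
    · rw [Finset.card_powerset, Finset.card_range]
      rw [Finset.card_image_of_injective _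
        (fun a b hab => Fin.val_injective (bitFinset_inj hab))]
      simp
  rw [← himg] at hw
  rw [Finset.mem_image] at hw
  obtain ⟨c, _, hc⟩ := hw
  exact ⟨c, hc⟩

-- weight transfer
lemma weight_transfer (n : ℕ) (g : Fin (2^n) → ZMod 2) (G : Finset ℕ → ZMod 2)
    (hg : ∀ c : Fin (2^n), g c = G (bitFinset (c : ℕ))) :
    (Finset.univ.filter (fun c => g c ≠ 0)).card
      = (((Finset.range n).powerset).filter (fun w => G w ≠ 0)).card := by
  classical
  apply Finset.card_bij (fun (c : Fin (2^n)) (_ : c ∈ Finset.univ.filter (fun c => g c ≠ 0)) => bitFinset c.val)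
  · intro c hc
    rw [Finset.mem_filter] at hc ⊢
    exact ⟨Finset.mem_powerset.mpr (bitFinset_lt_two_pow c.isLt), by rw [← hg]; exact hc.2⟩
  · intro c1 _ c2 _ hab
    exact Fin.val_injective (bitFinset_inj hab)
  · intro w hw
    rw [Finset.mem_filter] at hw
    obtain ⟨c, hc⟩ := bitFinset_surj n hw.1
    refine ⟨c, ?_, hc⟩
    rw [Finset.mem_filter]
    exact ⟨Finset.mem_univ c, by rw [hg, hc]; exact hw.2⟩


/-- for a disjoint-support pair `(i, j)` of common popcount `ℓ ≥ 1`,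
adding any rows of popcount at least `ℓ+1` cannot decrease the Hamming weight below
`i₁(g_i + g_j) = 2^(ℓ+1) - 2`. -/
theorem merged_pair_weight_lower_bound_disjoint (n ℓ : ℕ) (hℓ : 1 ≤ ℓ)
    (i j : Fin (2 ^ n)) (hij : i ≠ j)
    (hi : popcount (i : ℕ) = ℓ) (hj : popcount (j : ℕ) = ℓ)
    (hand : (i : ℕ) &&& (j : ℕ) = 0)
    (T : Finset (Fin (2 ^ n))) (hT : ∀ t ∈ T, ℓ + 1 ≤ popcount (t : ℕ)) :
    hammingWeight (row n i + row n j) ≤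
        hammingWeight (row n i + row n j + ∑ t ∈ T, row n t) ∧
      hammingWeight (row n i + row n j) = 2 ^ (ℓ + 1) - 2 := by
  classical
  set Ai := bitFinset (i : ℕ) with hAi
  set Bj := bitFinset (j : ℕ) with hBj
  set 𝒯 := T.image (fun t : Fin (2^n) => bitFinset t.val) with h𝒯def
  have hA : Ai ⊆ Finset.range n := bitFinset_lt_two_pow i.isLt
  have hB : Bj ⊆ Finset.range n := bitFinset_lt_two_pow j.isLt
  have hcA : Ai.card = ℓ := by rw [hAi, ← popcount_eq_card]; exact hi
  have hcB : Bj.card = ℓ := by rw [hBj, ← popcount_eq_card]; exact hj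
  have hdisj : Disjoint Ai Bj := bitFinset_disjoint_iff.mpr hand
  have hABne : Ai ≠ Bj := fun h => hij (Fin.val_injective (bitFinset_inj h))
  have h𝒯 : ∀ t' ∈ 𝒯, t' ⊆ Finset.range n ∧ ℓ + 1 ≤ t'.card := by
    intro t' ht'
    rw [h𝒯def, Finset.mem_image] at ht'
    obtain ⟨t, htT, rfl⟩ := ht'
    exact ⟨bitFinset_lt_two_pow t.isLt, by rw [← popcount_eq_card]; exact hT t htT⟩
  have hTinj : ∀ x ∈ T, ∀ y ∈ T,
      (fun t : Fin (2^n) => bitFinset t.val) x = (fun t : Fin (2^n) => bitFinset t.val) y → x = y :=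
    fun x _ y _ h => Fin.val_injective (bitFinset_inj h)
  -- pointwise formulas
  have hrow : ∀ (t : Fin (2^n)) (c : Fin (2^n)),
      row n t c = if bitFinset (c : ℕ) ⊆ bitFinset (t : ℕ) then 1 else 0 := by
    intro t c
    rw [row, polarG_apply]
    exact (if_congr bitFinset_subset_iff rfl rfl).symm
  have h2 : ∀ c : Fin (2^n),
      (row n i + row n j + ∑ t ∈ T, row n t) c = Fc Ai Bj 𝒯 (bitFinset (c : ℕ)) := by
    intro c
    simp only [Pi.add_apply, Finset.sum_apply]
    rw [Fc, h𝒯def, Finset.sum_image hTinj]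
    rw [hrow i c, hrow j c]
    congr 1
    exact Finset.sum_congr rfl (fun t _ => hrow t c)
  have h3 : ∀ c : Fin (2^n),
      (row n i + row n j) c = Fc Ai Bj (∅ : Finset (Finset ℕ)) (bitFinset (c : ℕ)) := by
    intro c
    simp only [Pi.add_apply]
    rw [Fc, Finset.sum_empty, add_zero, hrow i c, hrow j c]
  have wEq1 : hammingWeight (row n i + row n j + ∑ t ∈ T, row n t)
      = (Sc (Finset.range n) Ai Bj 𝒯).card := by
    rw [hammingWeight]
    exact weight_transfer n _ (Fc Ai Bj 𝒯) h2
  have wEq2 : hammingWeight (row n i + row n j)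
      = (Sc (Finset.range n) Ai Bj ∅).card := by
    rw [hammingWeight]
    exact weight_transfer n _ (Fc Ai Bj ∅) h3
  have hpair : hammingWeight (row n i + row n j) = 2 ^ (ℓ + 1) - 2 := by
    rw [wEq2, Sc_empty_card hA hB hdisj hcA hcB]
  refine ⟨?_, hpair⟩
  rw [hpair, wEq1]
  exact core_bound hA hB hdisj hcA hcB hABne hℓ h𝒯
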